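/- For all integers d ≥ 1 and n ≥ d there exists a graph G whose vertex set is partitioned into three sets A, B, C with |A| = n, |B| = ⌈√d⌉·n and |C| = d, such that: A, B and C are each independent sets; every vertex of A has exactly d neighbours, all of them in B; every vertex of B has at most ⌈√d⌉ neighbours in A; every vertex of B is adjacent to every vertex of C; and there are no edges between A and C. Moreover, any such graph has minimum degree exactly d. -/

import Mathlib

namespace LBGaux

/-- `b` is (mod `m`) in the block `[a*d, a*d+d)`. -/
def P (d m a b : ℕ) : Prop := ∃ k, a * d ≤ b + k * m ∧ b + k * m < a * d + d

abbrev Vt (n m d : ℕ) : Type := Fin n ⊕ Fin m ⊕ Fin d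

def R (n m d : ℕ) : Vt n m d → Vt n m d → Prop
  | Sum.inl a, Sum.inr (Sum.inl b) => P d m a.val b.val
  | Sum.inr (Sum.inl _), Sum.inr (Sum.inr _) => True
  | _, _ => False

def Gr (n m d : ℕ) : SimpleGraph (Vt n m d) := SimpleGraph.fromRel (R n m d)

lemma P_iff (d m a b : ℕ) (hb : b < m) :
    P d m a b ↔ ∃ i < d, b = (a * d + i) % m := by
  constructor
  · rintro ⟨k, h1, h2⟩
    refine ⟨b + k * m - a * d, by omega, ?_⟩
    have he : a * d + (b + k * m - a * d) = b + k * m := by omega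
    rw [he, Nat.add_mul_mod_self_right, Nat.mod_eq_of_lt hb]
  · rintro ⟨i, hi, rfl⟩
    refine ⟨(a * d + i) / m, ?_, ?_⟩ <;>
    · have h1 := Nat.mod_add_div (a * d + i) m
      have h2 : (a * d + i) / m * m = m * ((a * d + i) / m) := Nat.mul_comm _ _
      omega

lemma adj_iff_AB (n m d : ℕ) (a : Fin n) (b : Fin m) :
    (Gr n m d).Adj (Sum.inl a) (Sum.inr (Sum.inl b)) ↔ P d m a.val b.val := by
  simp [Gr, SimpleGraph.fromRel_adj, R]

lemma not_adj_AA (n m d : ℕ) (a a' : Fin n) :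
    ¬ (Gr n m d).Adj (Sum.inl a) (Sum.inl a') := by
  simp [Gr, SimpleGraph.fromRel_adj, R]

lemma not_adj_BB (n m d : ℕ) (b b' : Fin m) :
    ¬ (Gr n m d).Adj (Sum.inr (Sum.inl b)) (Sum.inr (Sum.inl b')) := by
  simp [Gr, SimpleGraph.fromRel_adj, R]

lemma not_adj_CC (n m d : ℕ) (c c' : Fin d) :
    ¬ (Gr n m d).Adj (Sum.inr (Sum.inr c)) (Sum.inr (Sum.inr c')) := by
  simp [Gr, SimpleGraph.fromRel_adj, R]

lemma not_adj_AC (n m d : ℕ) (a : Fin n) (c : Fin d) :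
    ¬ (Gr n m d).Adj (Sum.inl a) (Sum.inr (Sum.inr c)) := by
  simp [Gr, SimpleGraph.fromRel_adj, R]

lemma adj_BC (n m d : ℕ) (b : Fin m) (c : Fin d) :
    (Gr n m d).Adj (Sum.inr (Sum.inl b)) (Sum.inr (Sum.inr c)) := by
  simp [Gr, SimpleGraph.fromRel_adj, R]

lemma nbr_inl (n m d : ℕ) (hm : 0 < m) (a : Fin n) :
    (Gr n m d).neighborSet (Sum.inl a) =
      (fun i : Fin d => (Sum.inr (Sum.inl ⟨(a.val * d + i.val) % m, Nat.mod_lt _ hm⟩)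
        : Vt n m d)) '' Set.univ := by
  ext x
  rcases x with a' | b | c
  · simp [not_adj_AA]
  · simp only [SimpleGraph.mem_neighborSet, adj_iff_AB, Set.image_univ, Set.mem_range,
      P_iff d m a.val b.val b.isLt]
    constructor
    · rintro ⟨i, hi, hbe⟩
      exact ⟨⟨i, hi⟩, by simp [Fin.ext_iff, hbe.symm]⟩
    · rintro ⟨i, hi⟩
      refine ⟨i.val, i.isLt, ?_⟩
      have := congrArg (fun x : Vt n m d => match x with
        | Sum.inr (Sum.inl b) => b.val | _ => 0) hi
      simpa using this.symm
  · simp [not_adj_AC]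

lemma nbr_inl_ncard (n m d : ℕ) (hm : 0 < m) (hdm : d ≤ m) (a : Fin n) :
    ((Gr n m d).neighborSet (Sum.inl a)).ncard = d := by
  rw [nbr_inl n m d hm a]
  rw [Set.ncard_image_of_injective _ ?_, Set.ncard_univ]
  · simp
  · intro i j hij
    have h : (a.val * d + i.val) % m = (a.val * d + j.val) % m := by
      have := congrArg (fun x : Vt n m d => match x with
        | Sum.inr (Sum.inl b) => b.val | _ => 0) hij
      simpa using this
    have hi := i.isLt; have hj := j.isLt
    have hmod : i.val % m = j.val % m := Nat.ModEq.add_left_cancel' _ h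
    rw [Nat.mod_eq_of_lt (lt_of_lt_of_le hi hdm), Nat.mod_eq_of_lt (lt_of_lt_of_le hj hdm)] at hmod
    exact Fin.ext hmod


lemma count_B (n m d q : ℕ) (hm : 0 < m) (hd : 0 < d) (hdm : d ≤ m)
    (hnd : n * d ≤ q * m) (b : Fin m) :
    ({ x : Vt n m d | ∃ a : Fin n, x = Sum.inl a ∧ P d m a.val b.val }).ncard ≤ q := by
  classical
  have key : ∀ (a : Fin n) (k : ℕ), a.val * d ≤ b.val + k * m → b.val + k * m < a.val * d + d →
      (a.val * d + d - 1 - b.val) / m = k ∧ k < q := by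
    intro a k h1 h2
    have hr : (k + 1) * m = k * m + m := by ring
    constructor
    · have e1 : k * m ≤ a.val * d + d - 1 - b.val := by omega
      have e2 : a.val * d + d - 1 - b.val < (k + 1) * m := by omega
      exact Nat.div_eq_of_lt_le e1 e2
    · have h4 : (a.val + 1) * d ≤ n * d := Nat.mul_le_mul_right d a.isLt
      have h5 : (a.val + 1) * d = a.val * d + d := by ring
      have h6 : k * m < q * m := by omega
      exact Nat.lt_of_mul_lt_mul_right h6
  have hle := Set.ncard_le_ncard_of_injOn
    (s := { x : Vt n m d | ∃ a : Fin n, x = Sum.inl a ∧ P d m a.val b.val })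
    (f := fun x : Vt n m d => match x with
      | Sum.inl a => (a.val * d + d - 1 - b.val) / m
      | _ => 0)
    (t := ↑(Finset.range q)) ?_ ?_ (Finset.finite_toSet _)
  · rwa [Set.ncard_coe_finset, Finset.card_range] at hle
  · rintro x ⟨a, rfl, k, h1, h2⟩
    simp only [Finset.coe_range, Set.mem_Iio]
    rw [(key a k h1 h2).1]
    exact (key a k h1 h2).2
  · rintro x ⟨a, rfl, k, h1, h2⟩ y ⟨a', rfl, k', h1', h2'⟩ hxy
    simp only at hxy
    rw [(key a k h1 h2).1, (key a' k' h1' h2').1] at hxy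
    subst hxy
    have ha : (b.val + k * m) / d = a.val :=
      Nat.div_eq_of_lt_le h1 (by
        have hh : (a.val + 1) * d = a.val * d + d := by ring
        omega)
    have ha' : (b.val + k * m) / d = a'.val :=
      Nat.div_eq_of_lt_le h1' (by
        have hh : (a'.val + 1) * d = a'.val * d + d := by ring
        omega)
    have : a = a' := Fin.ext (ha ▸ ha')
    rw [this]

lemma sqrt_facts (d : ℕ) (hd : 1 ≤ d) :
    1 ≤ ⌈Real.sqrt d⌉₊ ∧ d ≤ ⌈Real.sqrt d⌉₊ * ⌈Real.sqrt d⌉₊ := by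
  have h0 : (0:ℝ) ≤ (d:ℝ) := by positivity
  have hsq : Real.sqrt d * Real.sqrt d = d := Real.mul_self_sqrt h0
  have hle : Real.sqrt d ≤ (⌈Real.sqrt d⌉₊ : ℝ) := Nat.le_ceil _
  constructor
  · exact Nat.ceil_pos.mpr (Real.sqrt_pos.mpr (by exact_mod_cast hd))
  · have : (d:ℝ) ≤ (⌈Real.sqrt d⌉₊ : ℝ) * (⌈Real.sqrt d⌉₊ : ℝ) := by
      nlinarith [Real.sqrt_nonneg (d:ℝ)]
    exact_mod_cast this


lemma nbr_inter (n m d : ℕ) (b : Fin m) :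
    (Gr n m d).neighborSet (Sum.inr (Sum.inl b)) ∩ (Set.range (Sum.inl : Fin n → Vt n m d)) =
      { x : Vt n m d | ∃ a : Fin n, x = Sum.inl a ∧ P d m a.val b.val } := by
  ext x
  rcases x with a | b' | c
  · simp [SimpleGraph.mem_neighborSet, (Gr n m d).adj_comm, adj_iff_AB]
  · simp
  · simp

def AF (n m d : ℕ) : Finset (Vt n m d) := Finset.univ.map ⟨Sum.inl, Sum.inl_injective⟩
def BF (n m d : ℕ) : Finset (Vt n m d) :=
  Finset.univ.map ⟨fun b => Sum.inr (Sum.inl b), fun x y h => by simpa using h⟩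
def CF (n m d : ℕ) : Finset (Vt n m d) :=
  Finset.univ.map ⟨fun c => Sum.inr (Sum.inr c), fun x y h => by simpa using h⟩

@[simp] lemma mem_AF {n m d : ℕ} {x : Vt n m d} : x ∈ AF n m d ↔ ∃ a, Sum.inl a = x := by
  simp [AF]
@[simp] lemma mem_BF {n m d : ℕ} {x : Vt n m d} :
    x ∈ BF n m d ↔ ∃ b, Sum.inr (Sum.inl b) = x := by simp [BF]; rfl
@[simp] lemma mem_CF {n m d : ℕ} {x : Vt n m d} :
    x ∈ CF n m d ↔ ∃ c, Sum.inr (Sum.inr c) = x := by simp [CF]; rfl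

lemma coe_AF (n m d : ℕ) : ↑(AF n m d) = Set.range (Sum.inl : Fin n → Vt n m d) := by
  ext x; simp

@[simp] lemma card_AF (n m d : ℕ) : (AF n m d).card = n := by simp [AF]
@[simp] lemma card_BF (n m d : ℕ) : (BF n m d).card = m := by simp [BF]
@[simp] lemma card_CF (n m d : ℕ) : (CF n m d).card = d := by simp [CF]

end LBGaux


/-- The construction of Theorem 2: the vertex set is partitioned into `A`, `B`, `C`
with `|A| = n`, `|B| = ⌈√d⌉ n`, `|C| = d`, all three independent; every vertex of `A`
has exactly `d` neighbours, all in `B`; every vertex of `B` has at most `⌈√d⌉`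
neighbours in `A`; `B` and `C` are completely joined; and there are no `A`–`C` edges. -/
def IsLowerBoundGraph (d n : ℕ) {V : Type} [Fintype V] [DecidableEq V] (G : SimpleGraph V)
    (A B C : Finset V) : Prop :=
  Disjoint A B ∧ Disjoint A C ∧ Disjoint B C ∧ A ∪ B ∪ C = Finset.univ ∧
  A.card = n ∧ B.card = ⌈Real.sqrt d⌉₊ * n ∧ C.card = d ∧
  (∀ v ∈ A, ∀ w ∈ A, ¬ G.Adj v w) ∧
  (∀ v ∈ B, ∀ w ∈ B, ¬ G.Adj v w) ∧
  (∀ v ∈ C, ∀ w ∈ C, ¬ G.Adj v w) ∧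
  (∀ a ∈ A, (G.neighborSet a).ncard = d ∧ G.neighborSet a ⊆ ↑B) ∧
  (∀ b ∈ B, (G.neighborSet b ∩ ↑A).ncard ≤ ⌈Real.sqrt d⌉₊) ∧
  (∀ b ∈ B, ∀ c ∈ C, G.Adj b c) ∧
  (∀ a ∈ A, ∀ c ∈ C, ¬ G.Adj a c)

/-- For `1 ≤ d ≤ n` such a graph exists, and any such graph has minimum degree
exactly `d`. -/
theorem lower_bound_graph_exists_and_min_degree (d n : ℕ) (hd : 1 ≤ d) (hn : d ≤ n) :
    (∃ (V : Type) (_ : Fintype V) (_ : DecidableEq V) (G : SimpleGraph V) (A B C : Finset V),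
      IsLowerBoundGraph d n G A B C) ∧
    (∀ (V : Type) [Fintype V] [DecidableEq V] (G : SimpleGraph V) (A B C : Finset V),
      IsLowerBoundGraph d n G A B C →
        (∀ v : V, d ≤ (G.neighborSet v).ncard) ∧
        (∃ v : V, (G.neighborSet v).ncard = d)) := by
  obtain ⟨hs1, hds⟩ := LBGaux.sqrt_facts d hd
  constructor
  · -- existence of the construction
    set s := ⌈Real.sqrt (d : ℝ)⌉₊ with hsdef
    set m := s * n with hmdef
    have hn0 : 0 < n := le_trans hd hn
    have hm : 0 < m := Nat.mul_pos (by omega) hn0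
    have hnm : n ≤ m := Nat.le_mul_of_pos_left n (by omega)
    have hdm : d ≤ m := le_trans hn hnm
    have hnd : n * d ≤ s * m := by
      calc n * d ≤ n * (s * s) := Nat.mul_le_mul_left n hds
        _ = s * (s * n) := by ring
    refine ⟨LBGaux.Vt n m d, inferInstance, inferInstance, LBGaux.Gr n m d,
      LBGaux.AF n m d, LBGaux.BF n m d, LBGaux.CF n m d,
      ?_, ?_, ?_, ?_, ?_, ?_, ?_, ?_, ?_, ?_, ?_, ?_, ?_, ?_⟩
    · rw [Finset.disjoint_left]
      rintro x hx hy
      obtain ⟨a, rfl⟩ := LBGaux.mem_AF.1 hx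
      obtain ⟨b, hb⟩ := LBGaux.mem_BF.1 hy
      cases hb
    · rw [Finset.disjoint_left]
      rintro x hx hy
      obtain ⟨a, rfl⟩ := LBGaux.mem_AF.1 hx
      obtain ⟨c, hc⟩ := LBGaux.mem_CF.1 hy
      cases hc
    · rw [Finset.disjoint_left]
      rintro x hx hy
      obtain ⟨b, rfl⟩ := LBGaux.mem_BF.1 hx
      obtain ⟨c, hc⟩ := LBGaux.mem_CF.1 hy
      simpa using hc
    · ext x
      simp only [Finset.mem_union, LBGaux.mem_AF, LBGaux.mem_BF, LBGaux.mem_CF,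
        Finset.mem_univ, iff_true]
      rcases x with a | b | c
      exacts [Or.inl (Or.inl ⟨a, rfl⟩), Or.inl (Or.inr ⟨b, rfl⟩), Or.inr ⟨c, rfl⟩]
    · simp
    · simp [hmdef]; exact Or.inl hsdef
    · simp
    · rintro v hv w hw
      obtain ⟨a, rfl⟩ := LBGaux.mem_AF.1 hv
      obtain ⟨a', rfl⟩ := LBGaux.mem_AF.1 hw
      exact LBGaux.not_adj_AA n m d a a'
    · rintro v hv w hw
      obtain ⟨b, rfl⟩ := LBGaux.mem_BF.1 hv
      obtain ⟨b', rfl⟩ := LBGaux.mem_BF.1 hw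
      exact LBGaux.not_adj_BB n m d b b'
    · rintro v hv w hw
      obtain ⟨c, rfl⟩ := LBGaux.mem_CF.1 hv
      obtain ⟨c', rfl⟩ := LBGaux.mem_CF.1 hw
      exact LBGaux.not_adj_CC n m d c c'
    · rintro v hv
      obtain ⟨a, rfl⟩ := LBGaux.mem_AF.1 hv
      refine ⟨LBGaux.nbr_inl_ncard n m d hm hdm a, ?_⟩
      rw [LBGaux.nbr_inl n m d hm a]
      rintro x ⟨i, -, rfl⟩
      exact Finset.mem_coe.2 (LBGaux.mem_BF.2 ⟨_, rfl⟩)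
    · rintro v hv
      obtain ⟨b, rfl⟩ := LBGaux.mem_BF.1 hv
      rw [LBGaux.coe_AF, LBGaux.nbr_inter]
      exact LBGaux.count_B n m d s hm (by omega) hdm hnd b
    · rintro v hv w hw
      obtain ⟨b, rfl⟩ := LBGaux.mem_BF.1 hv
      obtain ⟨c, rfl⟩ := LBGaux.mem_CF.1 hw
      exact LBGaux.adj_BC n m d b c
    · rintro v hv w hw
      obtain ⟨a, rfl⟩ := LBGaux.mem_AF.1 hv
      obtain ⟨c, rfl⟩ := LBGaux.mem_CF.1 hw
      exact LBGaux.not_adj_AC n m d a c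
  · -- minimum degree of any such graph
    rintro V _ _ G A B C
      ⟨hAB, hAC, hBC, hU, hcA, hcB, hcC, hiA, hiB, hiC, hdegA, hdegB, hadjBC, hnadjAC⟩
    constructor
    · intro v
      have hv : v ∈ A ∪ B ∪ C := by rw [hU]; exact Finset.mem_univ v
      rcases Finset.mem_union.1 hv with hv' | hv'
      · rcases Finset.mem_union.1 hv' with hv'' | hv''
        · exact le_of_eq (hdegA v hv'').1.symm
        · -- v ∈ B : all of C is adjacent
          have hsub : (↑C : Set V) ⊆ G.neighborSet v :=
            fun c hc => hadjBC v hv'' c (Finset.mem_coe.1 hc)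
          calc d = C.card := hcC.symm
            _ = (↑C : Set V).ncard := (Set.ncard_coe_finset C).symm
            _ ≤ (G.neighborSet v).ncard := Set.ncard_le_ncard hsub (Set.toFinite _)
      · -- v ∈ C : all of B is adjacent
        have hsub : (↑B : Set V) ⊆ G.neighborSet v :=
          fun b hb => (hadjBC b (Finset.mem_coe.1 hb) v hv').symm
        calc d ≤ n := hn
          _ ≤ ⌈Real.sqrt d⌉₊ * n := Nat.le_mul_of_pos_left n (by omega)
          _ = B.card := hcB.symm
          _ = (↑B : Set V).ncard := (Set.ncard_coe_finset B).symm
          _ ≤ (G.neighborSet v).ncard := Set.ncard_le_ncard hsub (Set.toFinite _)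
    · have hA : A.Nonempty := Finset.card_pos.1 (by rw [hcA]; omega)
      obtain ⟨a, ha⟩ := hA
      exact ⟨a, (hdegA a ha).1⟩
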